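/- Let V be a finite set with |V| ≥ 3 and A, B two dense skew-symmetric matrices indexed by V over a field of characteristic ≠ 2 such that the bordered matrices A^∞ and B^∞ are (≤4)-HL-equivalent. Then every equivalence class of the relation E_{A,B} is a clan of both A and B, and every equivalence class of D_{A,B} is a clan of both A and B. -/

import Mathlib

open Matrix

/-- The bordered matrix `A^∞`, indexed by `Option V` where `none` plays the role of `∞`. -/
def border {V K : Type*} [Zero K] [One K] [Neg K] (A : Matrix V V K) :
    Matrix (Option V) (Option V) K :=
  fun i j =>
    match i, j with
    | none, none => 0
    | none, some _ => 1
    | some _, none => -1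
    | some a, some b => A a b

/-- Principal minor of `M` indexed by the finite set `X`. -/
noncomputable def pminor {W K : Type*} [DecidableEq W] [Field K]
    (M : Matrix W W K) (X : Finset W) : K :=
  (M.submatrix (fun i : {a // a ∈ X} => (i : W)) (fun j : {a // a ∈ X} => (j : W))).det

/-- The equivalence relation `E_{A,B}` generated by the pairs where `A` and `B` agree. -/
def Erel {V K : Type*} (A B : Matrix V V K) : V → V → Prop :=
  Relation.EqvGen (fun x y => A x y = B x y)

/-- The equivalence relation `D_{A,B}` generated by the pairs where `A` and `-B` agree. -/
def Drel {V K : Type*} [Neg K] (A B : Matrix V V K) : V → V → Prop :=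
  Relation.EqvGen (fun x y => A x y = -B x y)

/-- `I` is a clan of the matrix `A`. -/
def IsClan {V K : Type*} (A : Matrix V V K) (I : Set V) : Prop :=
  ∀ i ∈ I, ∀ j ∈ I, ∀ x ∉ I, A x i = A x j ∧ A i x = A j x

lemma pminor_image {W K : Type*} [DecidableEq W] [Field K] {n : ℕ}
    (M : Matrix W W K) (g : Fin n → W) (hg : Function.Injective g) :
    pminor M (Finset.image g Finset.univ) = (M.submatrix g g).det := by
  have hbij : Function.Bijective
      (fun i : Fin n => (⟨g i, by simp⟩ : {a // a ∈ Finset.image g Finset.univ})) := by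
    constructor
    · intro i j h; exact hg (congrArg Subtype.val h)
    · rintro ⟨a, ha⟩
      simp only [Finset.mem_image, Finset.mem_univ, true_and] at ha
      obtain ⟨i, rfl⟩ := ha
      exact ⟨i, rfl⟩
  unfold pminor
  rw [← Matrix.det_submatrix_equiv_self (Equiv.ofBijective _ hbij)]
  rfl

lemma det_border_four {V K : Type*} [Field K] (A : Matrix V V K) (u v w : V)
    (hd : ∀ x, A x x = 0) (hs : ∀ x y, A y x = -A x y) :
    ((border A).submatrix ![none, some u, some v, some w]
      ![none, some u, some v, some w]).det = (A u v - A u w + A v w)^2 := by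
  have hM : (border A).submatrix ![none, some u, some v, some w]
      ![none, some u, some v, some w] =
      !![0,1,1,1; -1,0,A u v,A u w; -1,-(A u v),0,A v w; -1,-(A u w),-(A v w),0] := by
    ext i j
    fin_cases i <;> fin_cases j <;>
      first | exact hd _ | exact hs _ _ | rfl
  rw [hM]
  simp [Matrix.det_succ_row_zero, Fin.sum_univ_succ, Fin.succAbove]
  ring

lemma det_border_two {V K : Type*} [Field K] (A : Matrix V V K) (u v : V)
    (hd : ∀ x, A x x = 0) (hs : ∀ x y, A y x = -A x y) :
    ((border A).submatrix ![some u, some v] ![some u, some v]).det = A u v * A u v := by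
  have hM : (border A).submatrix ![some u, some v] ![some u, some v] =
      !![0, A u v; -(A u v), 0] := by
    ext i j
    fin_cases i <;> fin_cases j <;>
      first | exact hd _ | exact hs _ _ | rfl
  rw [hM, Matrix.det_fin_two]
  simp

theorem classes_are_clans {V K : Type*} [Fintype V] [DecidableEq V] [Field K]
    (hchar : (2 : K) ≠ 0) (hcard : 3 ≤ Fintype.card V)
    (A B : Matrix V V K)
    (hAskew : Aᵀ = -A) (hBskew : Bᵀ = -B)
    (hAdense : ∀ x y : V, x ≠ y → A x y ≠ 0)
    (hBdense : ∀ x y : V, x ≠ y → B x y ≠ 0)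
    (hequiv : ∀ X : Finset (Option V), X.card ≤ 4 →
      pminor (border A) X = pminor (border B) X) :
    ∀ x : V,
      (IsClan A {y | Erel A B x y} ∧ IsClan B {y | Erel A B x y}) ∧
      (IsClan A {y | Drel A B x y} ∧ IsClan B {y | Drel A B x y}) := by
  have hsA : ∀ u v, A v u = -A u v := by
    intro u v
    have := congrFun (congrFun hAskew u) v
    simpa using this
  have hsB : ∀ u v, B v u = -B u v := by
    intro u v
    have := congrFun (congrFun hBskew u) v
    simpa using this
  have hdA : ∀ u, A u u = 0 := by
    intro u
    have h := hsA u u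
    have h2 : (2 : K) * A u u = 0 := by linear_combination h
    exact (mul_eq_zero.mp h2).resolve_left hchar
  have hdB : ∀ u, B u u = 0 := by
    intro u
    have h := hsB u u
    have h2 : (2 : K) * B u u = 0 := by linear_combination h
    exact (mul_eq_zero.mp h2).resolve_left hchar
  -- size-2 minors: B u v = ± A u v
  have hsq : ∀ u v : V, u ≠ v → B u v = A u v ∨ B u v = -A u v := by
    intro u v huv
    have hg : Function.Injective ![some u, some v] := by
      intro i j hij
      fin_cases i <;> fin_cases j <;>
        first
          | rfl
          | exact absurd (Option.some.inj hij) huv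
          | exact absurd (Option.some.inj hij) huv.symm
    have h := hequiv (Finset.image ![some u, some v] Finset.univ)
      (le_trans Finset.card_image_le (by simp))
    rw [pminor_image _ _ hg, pminor_image _ _ hg, det_border_two A u v hdA hsA,
      det_border_two B u v hdB hsB] at h
    have hz : (B u v - A u v) * (B u v + A u v) = 0 := by linear_combination -h
    rcases mul_eq_zero.mp hz with h' | h'
    · exact Or.inl (sub_eq_zero.mp h')
    · exact Or.inr (eq_neg_of_add_eq_zero_left h')
  -- size-4 minors with ∞
  have htriple : ∀ u v w : V, u ≠ v → u ≠ w → v ≠ w →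
      (A u v - A u w + A v w)^2 = (B u v - B u w + B v w)^2 := by
    intro u v w huv huw hvw
    have hg : Function.Injective ![none, some u, some v, some w] := by
      intro i j hij
      fin_cases i <;> fin_cases j <;>
        first
          | rfl
          | exact absurd (Option.some.inj hij) huv
          | exact absurd (Option.some.inj hij) huv.symm
          | exact absurd (Option.some.inj hij) huw
          | exact absurd (Option.some.inj hij) huw.symm
          | exact absurd (Option.some.inj hij) hvw
          | exact absurd (Option.some.inj hij) hvw.symm
          | exact absurd hij (by simp)
    have h := hequiv (Finset.image ![none, some u, some v, some w] Finset.univ)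
      (le_trans Finset.card_image_le (by simp))
    rw [pminor_image _ _ hg, pminor_image _ _ hg, det_border_four A u v w hdA hsA,
      det_border_four B u v w hdB hsB] at h
    exact h
  -- key algebraic step
  have hkey : ∀ u v w : V, u ≠ v → u ≠ w → v ≠ w →
      (B u v - B u w + B v w)^2 = (A u v + A u w - A v w)^2 → A u w = A v w := by
    intro u v w huv huw hvw heq
    have h := (htriple u v w huv huw hvw).trans heq
    have h4 : ((2:K) * 2 * A u v) * (A u w - A v w) = 0 := by linear_combination -h
    have hne : (2:K) * 2 * A u v ≠ 0 :=
      mul_ne_zero (mul_ne_zero hchar hchar) (hAdense u v huv)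
    exact sub_eq_zero.mp ((mul_eq_zero.mp h4).resolve_left hne)
  -- main induction for E
  have hEmain : ∀ u v, Erel A B u v → ∀ z, ¬ Erel A B u z → A u z = A v z := by
    intro u v huv
    induction huv with
    | rel p q hpq =>
        intro z hz
        by_cases hpqe : p = q
        · subst hpqe; rfl
        · have hpz : p ≠ z := by
            rintro rfl; exact hz (Relation.EqvGen.refl p)
          have hqz' : ¬ Erel A B q z := fun h =>
            hz (Relation.EqvGen.trans _ _ _ (Relation.EqvGen.rel _ _ hpq) h)
          have hqz : q ≠ z := by
            rintro rfl; exact hqz' (Relation.EqvGen.refl q)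
          have hBpz : B p z = -A p z := by
            rcases hsq p z hpz with h' | h'
            · exact absurd (show Erel A B p z from Relation.EqvGen.rel _ _ h'.symm) hz
            · exact h'
          have hBqz : B q z = -A q z := by
            rcases hsq q z hqz with h' | h'
            · exact absurd (show Erel A B q z from Relation.EqvGen.rel _ _ h'.symm) hqz'
            · exact h'
          refine hkey p q z hpqe hpz hqz ?_
          rw [← hpq, hBpz, hBqz]; ring
    | refl p => intro z _; rfl
    | symm p q hpq ih =>
        intro z hz
        have hpz : ¬ Erel A B p z := fun h =>
          hz (Relation.EqvGen.trans _ _ _ (Relation.EqvGen.symm _ _ hpq) h)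
        exact (ih z hpz).symm
    | trans p q r h1 h2 ih1 ih2 =>
        intro z hz
        have hqz : ¬ Erel A B q z := fun h =>
          hz (Relation.EqvGen.trans _ _ _ h1 h)
        exact (ih1 z hz).trans (ih2 z hqz)
  -- main induction for D
  have hDmain : ∀ u v, Drel A B u v → ∀ z, ¬ Drel A B u z → A u z = A v z := by
    intro u v huv
    induction huv with
    | rel p q hpq =>
        intro z hz
        by_cases hpqe : p = q
        · subst hpqe; rfl
        · have hpz : p ≠ z := by
            rintro rfl; exact hz (Relation.EqvGen.refl p)
          have hqz' : ¬ Drel A B q z := fun h =>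
            hz (Relation.EqvGen.trans _ _ _ (Relation.EqvGen.rel _ _ hpq) h)
          have hqz : q ≠ z := by
            rintro rfl; exact hqz' (Relation.EqvGen.refl q)
          have hBpz : B p z = A p z := by
            rcases hsq p z hpz with h' | h'
            · exact h'
            · exact absurd (show Drel A B p z from Relation.EqvGen.rel p z (by rw [h']; ring)) hz
          have hBqz : B q z = A q z := by
            rcases hsq q z hqz with h' | h'
            · exact h'
            · exact absurd (show Drel A B q z from Relation.EqvGen.rel q z (by rw [h']; ring)) hqz'
          refine hkey p q z hpqe hpz hqz ?_
          have hBpq : B p q = -A p q := by rw [hpq]; ring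
          rw [hBpq, hBpz, hBqz]; ring
    | refl p => intro z _; rfl
    | symm p q hpq ih =>
        intro z hz
        have hpz : ¬ Drel A B p z := fun h =>
          hz (Relation.EqvGen.trans _ _ _ (Relation.EqvGen.symm _ _ hpq) h)
        exact (ih z hpz).symm
    | trans p q r h1 h2 ih1 ih2 =>
        intro z hz
        have hqz : ¬ Drel A B q z := fun h =>
          hz (Relation.EqvGen.trans _ _ _ h1 h)
        exact (ih1 z hz).trans (ih2 z hqz)
  intro x
  constructor
  · -- E-class
    have hmem : ∀ i j z : V, Erel A B x i → Erel A B x j → ¬ Erel A B x z →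
        A i z = A j z := by
      intro i j z hi hj hzn
      have hij : Erel A B i j := Relation.EqvGen.trans _ _ _
        (Relation.EqvGen.symm _ _ hi) hj
      have hiz : ¬ Erel A B i z := fun h =>
        hzn (Relation.EqvGen.trans _ _ _ hi h)
      exact hEmain i j hij z hiz
    constructor
    · intro i hi j hj z hzn
      have h := hmem i j z hi hj hzn
      exact ⟨by rw [hsA i z, hsA j z, h], h⟩
    · intro i hi j hj z hzn
      have h := hmem i j z hi hj hzn
      have hiz : ¬ Erel A B i z := fun h' =>
        hzn (Relation.EqvGen.trans _ _ _ hi h')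
      have hjz : ¬ Erel A B j z := fun h' =>
        hzn (Relation.EqvGen.trans _ _ _ hj h')
      have hizne : i ≠ z := by rintro rfl; exact hiz (Relation.EqvGen.refl i)
      have hjzne : j ≠ z := by rintro rfl; exact hjz (Relation.EqvGen.refl j)
      have hBi : B i z = -A i z :=
        (hsq i z hizne).resolve_left
          (fun h' => hiz (show Erel A B i z from Relation.EqvGen.rel _ _ h'.symm))
      have hBj : B j z = -A j z :=
        (hsq j z hjzne).resolve_left
          (fun h' => hjz (show Erel A B j z from Relation.EqvGen.rel _ _ h'.symm))
      have hB : B i z = B j z := by rw [hBi, hBj, h]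
      exact ⟨by rw [hsB i z, hsB j z, hB], hB⟩
  · -- D-class
    have hmem : ∀ i j z : V, Drel A B x i → Drel A B x j → ¬ Drel A B x z →
        A i z = A j z := by
      intro i j z hi hj hzn
      have hij : Drel A B i j := Relation.EqvGen.trans _ _ _
        (Relation.EqvGen.symm _ _ hi) hj
      have hiz : ¬ Drel A B i z := fun h =>
        hzn (Relation.EqvGen.trans _ _ _ hi h)
      exact hDmain i j hij z hiz
    constructor
    · intro i hi j hj z hzn
      have h := hmem i j z hi hj hzn
      exact ⟨by rw [hsA i z, hsA j z, h], h⟩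
    · intro i hi j hj z hzn
      have h := hmem i j z hi hj hzn
      have hiz : ¬ Drel A B i z := fun h' =>
        hzn (Relation.EqvGen.trans _ _ _ hi h')
      have hjz : ¬ Drel A B j z := fun h' =>
        hzn (Relation.EqvGen.trans _ _ _ hj h')
      have hizne : i ≠ z := by rintro rfl; exact hiz (Relation.EqvGen.refl i)
      have hjzne : j ≠ z := by rintro rfl; exact hjz (Relation.EqvGen.refl j)
      have hBi : B i z = A i z :=
        (hsq i z hizne).resolve_right
          (fun h' => hiz (show Drel A B i z from Relation.EqvGen.rel _ _ (by rw [h']; ring)))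
      have hBj : B j z = A j z :=
        (hsq j z hjzne).resolve_right
          (fun h' => hjz (show Drel A B j z from Relation.EqvGen.rel _ _ (by rw [h']; ring)))
      have hB : B i z = B j z := by rw [hBi, hBj, h]
      exact ⟨by rw [hsB i z, hsB j z, hB], hB⟩
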